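/- Let γ be Euclidean gamma matrices with charge-conjugation matrix C, and let ψ^a : Fin 4 → R (a ∈ Fin 3) be Grassmann-odd Majorana spinors over a ℂ-algebra R. Let T^a := (1/2)·σ^a where σ^1, σ^2, σ^3 are the Pauli matrices, and set h a b c := trace(T^a·T^b·T^c). Then the scalar three-fermion operator of the gauge group SU(2) vanishes identically: Σ_{a,b,c} h a b c · ψ^a_α·(ψ̄^bψ^c) = 0 for every spinor index α. -/

import Mathlib

open Matrix Complex BigOperators

noncomputable section

abbrev M4 : Type := Matrix (Fin 4) (Fin 4) ℂ

/-- Euclidean Clifford relation: γ_μγ_ν + γ_νγ_μ = 2δ_{μν}·1. -/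
def CliffordRel (γ : Fin 4 → M4) : Prop :=
  ∀ μ ν, γ μ * γ ν + γ ν * γ μ = if μ = ν then (2 : ℂ) • (1 : M4) else 0

/-- γ5 := -(γ_0 γ_1 γ_2 γ_3). -/
def gamma5 (γ : Fin 4 → M4) : M4 := -(γ 0 * γ 1 * γ 2 * γ 3)

/-- σ_{μν} := (γ_μγ_ν - γ_νγ_μ)/2 = [γ_μ, γ_ν]/2. -/
def sigmaMat (γ : Fin 4 → M4) (μ ν : Fin 4) : M4 :=
  (2⁻¹ : ℂ) • (γ μ * γ ν - γ ν * γ μ)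

/-- Charge-conjugation matrix: invertible, Cᵀ = -C, C⁻¹γ_μC = -(γ_μ)ᵀ. -/
def ChargeConj (γ : Fin 4 → M4) (C : M4) : Prop :=
  IsUnit C.det ∧ Cᵀ = -C ∧ ∀ μ, C⁻¹ * γ μ * C = -(γ μ)ᵀ

/-- Majorana conjugate row vector: ξ̄_β := -Σ_α ξ_α·(C⁻¹)_{αβ}. -/
def MajBar {R : Type*} [Ring R] [Algebra ℂ R] (C : M4) (ξ : Fin 4 → R) (β : Fin 4) : R :=
  -∑ α, (C⁻¹ α β) • ξ α

/-- Spinor bilinear: ξ̄Mχ := Σ_{β,γ'} ξ̄_β·M_{βγ'}·χ_{γ'} (complex entries act by scalar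
multiplication). -/
def bilin {R : Type*} [Ring R] [Algebra ℂ R] (C : M4) (M : M4) (ξ χ : Fin 4 → R) : R :=
  ∑ β, ∑ g, M β g • (MajBar C ξ β * χ g)

/-- The Pauli matrices. -/
def pauli : Fin 3 → Matrix (Fin 2) (Fin 2) ℂ :=
  ![!![0, 1; 1, 0], !![0, -Complex.I; Complex.I, 0], !![1, 0; 0, -1]]

/-- h a b c := trace(T^a T^b T^c) with T^a = σ^a/2. -/
def su2h (a b c : Fin 3) : ℂ :=
  Matrix.trace (((2⁻¹ : ℂ) • pauli a) * ((2⁻¹ : ℂ) • pauli b) * ((2⁻¹ : ℂ) • pauli c))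

set_option maxHeartbeats 1000000 in
lemma su2h_anti (a b c : Fin 3) : su2h a b c = - su2h a c b := by
  fin_cases a <;> fin_cases b <;> fin_cases c <;>
  · simp only [su2h, pauli, Fin.isValue, Matrix.cons_val_zero, Matrix.cons_val_one,
      Matrix.head_cons, Matrix.cons_val_two, Matrix.tail_cons]
    norm_num [Matrix.trace_fin_two, Matrix.mul_apply, Fin.sum_univ_two,
      Matrix.smul_apply] <;> ring_nf

lemma Cinv_antisym (C : M4) (hdet : IsUnit C.det) (hT : Cᵀ = -C) :
    ∀ α β, C⁻¹ β α = -(C⁻¹ α β) := by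
  have h2 : (-C)⁻¹ = -C⁻¹ :=
    Matrix.inv_eq_right_inv (by rw [neg_mul_neg, Matrix.mul_nonsing_inv _ hdet])
  have h1 : (C⁻¹)ᵀ = -C⁻¹ := by
    rw [Matrix.transpose_nonsing_inv, hT, h2]
  intro α β
  have := congrArg (fun M : M4 => M α β) h1
  simpa using this

lemma bilin_one {R : Type*} [Ring R] [Algebra ℂ R] (C : M4) (ξ χ : Fin 4 → R) :
    bilin C 1 ξ χ = -∑ β, ∑ α, (C⁻¹ α β) • (ξ α * χ β) := by
  simp [bilin, MajBar, Matrix.one_apply, neg_mul, Finset.sum_mul, smul_mul_assoc,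
    Finset.sum_ite_eq', Finset.sum_neg_distrib]

lemma bilin_symm {R : Type*} [Ring R] [Algebra ℂ R] (C : M4)
    (hCa : ∀ α β, C⁻¹ β α = -(C⁻¹ α β)) (ξ χ : Fin 4 → R)
    (hodd : ∀ α β, ξ α * χ β = -(χ β * ξ α)) :
    bilin C 1 ξ χ = bilin C 1 χ ξ := by
  rw [bilin_one, bilin_one, Finset.sum_comm]
  congr 1
  refine Finset.sum_congr rfl fun β _ => Finset.sum_congr rfl fun α _ => ?_
  rw [hodd β α, hCa α β]
  simp

theorem statement14 {R : Type*} [Ring R] [Algebra ℂ R]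
    (γ : Fin 4 → M4) (C : M4) (hcl : CliffordRel γ) (hC : ChargeConj γ C)
    (ψ : Fin 3 → Fin 4 → R)
    (hodd : ∀ a b α β, ψ a α * ψ b β = -(ψ b β * ψ a α)) :
    ∀ α, ∑ a, ∑ b, ∑ c, su2h a b c • (ψ a α * bilin C 1 (ψ b) (ψ c)) = 0 := by
  obtain ⟨hdet, hT, _⟩ := hC
  have hCa := Cinv_antisym C hdet hT
  have hB : ∀ b c, bilin C 1 (ψ b) (ψ c) = bilin C 1 (ψ c) (ψ b) :=
    fun b c => bilin_symm C hCa (ψ b) (ψ c) (fun α β => hodd b c α β)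
  intro α
  refine Finset.sum_eq_zero fun a _ => ?_
  set S : R := ∑ b, ∑ c, su2h a b c • (ψ a α * bilin C 1 (ψ b) (ψ c)) with hS
  have hswap : S = -S := by
    calc S = ∑ c, ∑ b, su2h a b c • (ψ a α * bilin C 1 (ψ b) (ψ c)) := Finset.sum_comm
    _ = ∑ b, ∑ c, su2h a c b • (ψ a α * bilin C 1 (ψ c) (ψ b)) := rfl
    _ = ∑ b, ∑ c, -(su2h a b c • (ψ a α * bilin C 1 (ψ b) (ψ c))) := by
        refine Finset.sum_congr rfl fun b _ => Finset.sum_congr rfl fun c _ => ?_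
        rw [su2h_anti a c b, hB b c]
        simp
    _ = -S := by rw [hS]; simp
  have h2 : (2 : ℂ) • S = 0 := by
    rw [two_smul]
    nth_rewrite 1 [hswap]
    simp
  have : ((2 : ℂ)⁻¹ * 2) • S = 0 := by rw [mul_smul, h2, smul_zero]
  simpa using this
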